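/- Approximate Eaton condition implies small angular Fourier oscillation: let z be an integrable random vector in R² with a density f such that for every nonzero ξ ∈ R² and every w with wᵀξ = 0, |E[wᵀz | ξᵀz]| ≤ ε‖w‖ almost surely. Then for any ξ, ξ' ∈ R² with ‖ξ‖ = ‖ξ'‖ = r > 0, the Fourier transform f̂ satisfies |f̂(ξ') − f̂(ξ)| ≤ 2π C' r ε for an absolute constant C' ≥ 1. -/

import Mathlib

open Matrix MeasureTheory Real

lemma exp_decomp (t : ℝ) :
    Complex.exp (-(2 * π * Complex.I) * t) =
      (Real.cos (2 * π * t) : ℂ) - (Real.sin (2 * π * t) : ℂ) * Complex.I := by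
  have h : (-(2 * π * Complex.I) * t : ℂ) = ((-(2 * π * t) : ℝ) : ℂ) * Complex.I := by
    push_cast; ring
  rw [h, Complex.exp_mul_I, ← Complex.ofReal_cos, ← Complex.ofReal_sin,
    Real.cos_neg, Real.sin_neg]
  push_cast; ring

lemma exp_norm (t : ℝ) : ‖Complex.exp (-(2 * π * Complex.I) * t)‖ = 1 := by
  rw [Complex.norm_exp]
  simp

lemma pullout {Ω : Type*} {m0 : MeasurableSpace Ω} (ν : Measure Ω) (hprob : IsProbabilityMeasure ν)
    {m : MeasurableSpace Ω} (hm : m ≤ m0) {c g : Ω → ℝ}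
    (hc : StronglyMeasurable[m] c) (hcb : ∀ x, |c x| ≤ 1) (hg : Integrable g ν) :
    ∫ x, c x * g x ∂ν = ∫ x, c x * (ν[g|m]) x ∂ν := by
  haveI := hprob
  have h := condExp_stronglyMeasurable_mul_of_bound (μ := ν) hm hc hg 1
    (Filter.Eventually.of_forall fun x => by simpa using hcb x)
  calc ∫ x, c x * g x ∂ν = ∫ x, (ν[(c * g)|m]) x ∂ν := (integral_condExp (f := c * g) hm).symm
    _ = ∫ x, c x * (ν[g|m]) x ∂ν := integral_congr_ae h

lemma cpullout {Ω : Type*} {m0 : MeasurableSpace Ω} (ν : Measure Ω) (hprob : IsProbabilityMeasure ν)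
    {m : MeasurableSpace Ω} (hm : m ≤ m0) {t g : Ω → ℝ}
    (ht : Measurable[m] t) (hg : Integrable g ν) :
    ∫ x, (g x : ℂ) * Complex.exp (-(2 * π * Complex.I) * t x) ∂ν
      = ∫ x, ((ν[g|m]) x : ℂ) * Complex.exp (-(2 * π * Complex.I) * t x) ∂ν := by
  haveI := hprob
  have hE : Integrable (ν[g|m]) ν := integrable_condExp
  have hcos : StronglyMeasurable[m] fun x => Real.cos (2 * π * t x) :=
    (Real.measurable_cos.comp (measurable_const.mul ht)).stronglyMeasurable
  have hsin : StronglyMeasurable[m] fun x => Real.sin (2 * π * t x) :=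
    (Real.measurable_sin.comp (measurable_const.mul ht)).stronglyMeasurable
  have key : ∀ G : Ω → ℝ, Integrable G ν →
      ∫ x, (G x : ℂ) * Complex.exp (-(2 * π * Complex.I) * t x) ∂ν
        = (↑(∫ x, Real.cos (2 * π * t x) * G x ∂ν) : ℂ)
          - (↑(∫ x, Real.sin (2 * π * t x) * G x ∂ν) : ℂ) * Complex.I := by
    intro G hG
    have h1 : Integrable (fun x => Real.cos (2 * π * t x) * G x) ν :=
      hG.bdd_mul ((hcos.mono hm).aestronglyMeasurable)
        (Filter.Eventually.of_forall fun x => by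
          simpa using Real.abs_cos_le_one (2 * π * t x))
    have h2 : Integrable (fun x => Real.sin (2 * π * t x) * G x) ν :=
      hG.bdd_mul ((hsin.mono hm).aestronglyMeasurable)
        (Filter.Eventually.of_forall fun x => by
          simpa using Real.abs_sin_le_one (2 * π * t x))
    have hptw : ∀ x : Ω, (G x : ℂ) * Complex.exp (-(2 * π * Complex.I) * t x)
        = ((Real.cos (2 * π * t x) * G x : ℝ) : ℂ)
          - ((Real.sin (2 * π * t x) * G x : ℝ) : ℂ) * Complex.I := by
      intro x
      rw [exp_decomp]
      push_cast
      ring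
    calc ∫ x, (G x : ℂ) * Complex.exp (-(2 * π * Complex.I) * t x) ∂ν
        = ∫ x, (((Real.cos (2 * π * t x) * G x : ℝ) : ℂ)
            - ((Real.sin (2 * π * t x) * G x : ℝ) : ℂ) * Complex.I) ∂ν := by
          exact integral_congr_ae (Filter.Eventually.of_forall hptw)
      _ = (∫ x, ((Real.cos (2 * π * t x) * G x : ℝ) : ℂ) ∂ν)
            - ∫ x, ((Real.sin (2 * π * t x) * G x : ℝ) : ℂ) * Complex.I ∂ν := by
          exact integral_sub h1.ofReal (h2.ofReal.mul_const _)
      _ = (↑(∫ x, Real.cos (2 * π * t x) * G x ∂ν) : ℂ)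
          - (↑(∫ x, Real.sin (2 * π * t x) * G x ∂ν) : ℂ) * Complex.I := by
          have c1 : ∀ (F : Ω → ℝ), ∫ x, ((F x : ℝ) : ℂ) ∂ν = ((∫ x, F x ∂ν : ℝ) : ℂ) :=
            fun F => @integral_ofReal Ω m0 ν ℂ _ F
          rw [integral_mul_const, c1, c1]
  have p1 := pullout (m0 := m0) (m := m) ν hprob hm hcos (fun x => Real.abs_cos_le_one _) hg
  have p2 := pullout (m0 := m0) (m := m) ν hprob hm hsin (fun x => Real.abs_sin_le_one _) hg
  rw [key g hg, key _ hE, p1, p2]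

noncomputable def enorm (x : Fin 2 → ℝ) : ℝ := Real.sqrt (x ⬝ᵥ x)

/-- Characteristic function `f̂(ξ) = E[e^{−i2π⟨ξ,z⟩}]` of a law `ν` on `ℝ²`
(the Fourier transform of its density). -/
noncomputable def charFun (ν : Measure (Fin 2 → ℝ)) (ξ : Fin 2 → ℝ) : ℂ :=
  ∫ x, Complex.exp (-(2 * π * Complex.I) * (ξ ⬝ᵥ x : ℝ)) ∂ν

set_option maxHeartbeats 1000000 in
/-- There is an absolute constant `C' ≥ 1` such that: if `z ∼ ν` is an
integrable random vector in `ℝ²` with a Lebesgue density such that for every nonzero `ξ`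
and every `w ⊥ ξ`, `|E[wᵀz | ξᵀz]| ≤ ε‖w‖` a.s., then for any `ξ, ξ'` with
`‖ξ‖ = ‖ξ'‖ = r > 0`, `|f̂(ξ') − f̂(ξ)| ≤ 2π C' r ε`. -/
theorem charFun_angular_oscillation :
    ∃ C' : ℝ, 1 ≤ C' ∧
      ∀ (ν : Measure (Fin 2 → ℝ)), IsProbabilityMeasure ν →
      ∀ (f : (Fin 2 → ℝ) → ENNReal), Measurable f → ν = volume.withDensity f →
      (∀ i, Integrable (fun x : Fin 2 → ℝ => x i) ν) →
      ∀ ε : ℝ, 0 ≤ ε →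
      (∀ ξ : Fin 2 → ℝ, ξ ≠ 0 → ∀ w : Fin 2 → ℝ, w ⬝ᵥ ξ = 0 →
        ∀ᵐ x ∂ν,
          |(ν[(fun x => w ⬝ᵥ x) |
              MeasurableSpace.comap (fun x : Fin 2 → ℝ => ξ ⬝ᵥ x) (borel ℝ)]) x| ≤
            ε * _root_.enorm w) →
      ∀ (r : ℝ), 0 < r → ∀ ξ ξ' : Fin 2 → ℝ, _root_.enorm ξ = r → _root_.enorm ξ' = r →
        ‖charFun ν ξ' - charFun ν ξ‖ ≤ 2 * π * C' * r * ε := by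
  refine ⟨4, by norm_num, ?_⟩
  intro ν hprob f hfmeas hνdef hInt ε hε hEaton r hr ξ ξ' hξn hξ'n
  classical
  set ξv : ℝ → Fin 2 → ℝ := fun θ => ![r * Real.cos θ, r * Real.sin θ] with hξv
  set wv : ℝ → Fin 2 → ℝ := fun θ => ![-(r * Real.sin θ), r * Real.cos θ] with hwv
  have hdot : ∀ (θ : ℝ) (x : Fin 2 → ℝ),
      ξv θ ⬝ᵥ x = r * Real.cos θ * x 0 + r * Real.sin θ * x 1 := by
    intro θ x; simp [hξv, dotProduct, Fin.sum_univ_two]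
  have wdot : ∀ (θ : ℝ) (x : Fin 2 → ℝ),
      wv θ ⬝ᵥ x = -(r * Real.sin θ) * x 0 + r * Real.cos θ * x 1 := by
    intro θ x; simp [hwv, dotProduct, Fin.sum_univ_two]
  have hwperp : ∀ θ, wv θ ⬝ᵥ ξv θ = 0 := by
    intro θ; rw [wdot]; simp [hξv]; ring
  have hξvne : ∀ θ, ξv θ ≠ 0 := by
    intro θ h
    have h0 := congrFun h 0
    have h1 := congrFun h 1
    simp [hξv] at h0 h1
    rcases h0 with h0 | h0
    · exact hr.ne' h0
    rcases h1 with h1 | h1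
    · exact hr.ne' h1
    nlinarith [Real.sin_sq_add_cos_sq θ]
  have henw : ∀ θ, _root_.enorm (wv θ) = r := by
    intro θ
    unfold _root_.enorm
    rw [wdot]
    have : -(r * Real.sin θ) * wv θ 0 + r * Real.cos θ * wv θ 1 = r ^ 2 := by
      simp [hwv]
      nlinarith [Real.sin_sq_add_cos_sq θ]
    rw [this, Real.sqrt_sq hr.le]
  have mdot : ∀ v : Fin 2 → ℝ, Measurable fun x : Fin 2 → ℝ => v ⬝ᵥ x := by
    intro v
    simp only [dotProduct, Fin.sum_univ_two]
    fun_prop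
  have idot : ∀ v : Fin 2 → ℝ, Integrable (fun x => v ⬝ᵥ x) ν := by
    intro v
    simp only [dotProduct, Fin.sum_univ_two]
    exact ((hInt 0).const_mul (v 0)).add ((hInt 1).const_mul (v 1))
  set B : (Fin 2 → ℝ) → ℝ := fun x => 2 * π * r * (|x 0| + |x 1|) with hB
  have hBint : Integrable B ν := ((hInt 0).abs.add (hInt 1).abs).const_mul _
  set F : ℝ → (Fin 2 → ℝ) → ℂ := fun θ x =>
    Complex.exp (-(2 * π * Complex.I) * ((ξv θ ⬝ᵥ x : ℝ) : ℂ)) with hF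
  set F' : ℝ → (Fin 2 → ℝ) → ℂ := fun θ x =>
    Complex.exp (-(2 * π * Complex.I) * ((ξv θ ⬝ᵥ x : ℝ) : ℂ)) *
      (-(2 * π * Complex.I) * ((wv θ ⬝ᵥ x : ℝ) : ℂ)) with hF'
  have hFderiv : ∀ (θ₀ : ℝ) (x : Fin 2 → ℝ), HasDerivAt (fun θ => F θ x) (F' θ₀ x) θ₀ := by
    intro θ₀ x
    have hu : HasDerivAt (fun θ => ξv θ ⬝ᵥ x) (wv θ₀ ⬝ᵥ x) θ₀ := by
      simp only [hdot, wdot]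
      have h1 := (((Real.hasDerivAt_cos θ₀).const_mul r).mul_const (x 0)).add
        (((Real.hasDerivAt_sin θ₀).const_mul r).mul_const (x 1))
      exact h1.congr_deriv (by ring)
    have h2 := ((hu.ofReal_comp).const_mul (-(2 * π * Complex.I))).cexp
    convert h2 using 1
  have hnc : ‖(-(2 * (π : ℂ) * Complex.I))‖ = 2 * π := by
    simp [abs_of_pos Real.pi_pos]
  have hF'bound : ∀ (θ : ℝ) (x : Fin 2 → ℝ), ‖F' θ x‖ ≤ B x := by
    intro θ x
    rw [hF']
    simp only
    rw [norm_mul, exp_norm, one_mul, norm_mul, hnc, Complex.norm_real, Real.norm_eq_abs]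
    rw [hB]
    simp only
    rw [mul_assoc (2 * π) r, mul_le_mul_iff_right₀ (by positivity : (0:ℝ) < 2 * π)]
    rw [wdot]
    calc |(-(r * Real.sin θ)) * x 0 + r * Real.cos θ * x 1|
        ≤ |(-(r * Real.sin θ)) * x 0| + |r * Real.cos θ * x 1| := abs_add_le _ _
      _ ≤ r * (|x 0| + |x 1|) := by
          rw [abs_mul, abs_mul, abs_neg, abs_mul, abs_mul, abs_of_pos hr]
          have h1 := mul_le_mul_of_nonneg_right (Real.abs_sin_le_one θ) (abs_nonneg (x 0))
          have h2 := mul_le_mul_of_nonneg_right (Real.abs_cos_le_one θ) (abs_nonneg (x 1))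
          nlinarith [hr.le]
  have hFmeas : ∀ θ, AEStronglyMeasurable (F θ) ν := by
    intro θ
    exact (Complex.measurable_exp.comp
      ((Complex.measurable_ofReal.comp (mdot (ξv θ))).const_mul _)).aestronglyMeasurable
  have hFint : ∀ θ, Integrable (F θ) ν := by
    intro θ
    refine (integrable_const (1 : ℝ)).mono' (hFmeas θ) ?_
    exact Filter.Eventually.of_forall fun x => by rw [hF]; simp only; rw [exp_norm]
  have hF'meas : ∀ θ, AEStronglyMeasurable (F' θ) ν := by
    intro θ
    exact ((Complex.measurable_exp.comp
      ((Complex.measurable_ofReal.comp (mdot (ξv θ))).const_mul _)).mul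
      ((Complex.measurable_ofReal.comp (mdot (wv θ))).const_mul _)).aestronglyMeasurable
  have hGderiv : ∀ θ₀ : ℝ,
      HasDerivAt (fun θ => ∫ x, F θ x ∂ν) (∫ x, F' θ₀ x ∂ν) θ₀ := by
    intro θ₀
    exact (hasDerivAt_integral_of_dominated_loc_of_deriv_le (Metric.ball_mem_nhds θ₀ one_pos)
      (Filter.Eventually.of_forall fun θ => hFmeas θ) (hFint θ₀) (hF'meas θ₀)
      (Filter.Eventually.of_forall fun x θ _ => hF'bound θ x) hBint
      (Filter.Eventually.of_forall fun x θ _ => hFderiv θ x)).2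
  have hDbound : ∀ θ : ℝ, ‖∫ x, F' θ x ∂ν‖ ≤ 2 * π * (ε * r) := by
    intro θ
    have heq : (fun x : Fin 2 → ℝ => F' θ x)
        = fun x => -(2 * (π : ℂ) * Complex.I) *
            (((wv θ ⬝ᵥ x : ℝ) : ℂ) *
              Complex.exp (-(2 * π * Complex.I) * ((ξv θ ⬝ᵥ x : ℝ) : ℂ))) := by
      funext x; rw [hF']; ring
    rw [heq, integral_const_mul, norm_mul, hnc]
    have hble : borel ℝ = (inferInstance : MeasurableSpace ℝ) :=
      (BorelSpace.measurable_eq (α := ℝ)).symm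
    have hmeq : MeasurableSpace.comap (fun x : Fin 2 → ℝ => ξv θ ⬝ᵥ x) (borel ℝ)
        = MeasurableSpace.comap (fun x : Fin 2 → ℝ => ξv θ ⬝ᵥ x)
            (inferInstance : MeasurableSpace ℝ) := by rw [hble]
    have hm : MeasurableSpace.comap (fun x : Fin 2 → ℝ => ξv θ ⬝ᵥ x) (borel ℝ)
        ≤ MeasurableSpace.pi := by
      rw [hmeq]; exact measurable_iff_comap_le.mp (mdot (ξv θ))
    have ht : Measurable[MeasurableSpace.comap (fun x : Fin 2 → ℝ => ξv θ ⬝ᵥ x) (borel ℝ)]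
        (fun x => ξv θ ⬝ᵥ x) := measurable_iff_comap_le.mpr hmeq.ge
    have hcp := cpullout ν hprob hm ht (idot (wv θ))
    rw [hcp]
    have hae := hEaton (ξv θ) (hξvne θ) (wv θ) (hwperp θ)
    refine mul_le_mul_of_nonneg_left ?_ (by positivity)
    have hle : ‖∫ x, (((ν[(fun x => wv θ ⬝ᵥ x)|MeasurableSpace.comap (fun x : Fin 2 → ℝ => ξv θ ⬝ᵥ x) (borel ℝ)]) x : ℝ) : ℂ) *
        Complex.exp (-(2 * π * Complex.I) * ((ξv θ ⬝ᵥ x : ℝ) : ℂ)) ∂ν‖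
          ≤ ∫ _x, ε * r ∂ν := by
      refine norm_integral_le_of_norm_le (integrable_const (ε * r)) ?_
      filter_upwards [hae] with x hx
      rw [norm_mul, exp_norm, mul_one, Complex.norm_real, Real.norm_eq_abs]
      calc |(ν[(fun x => wv θ ⬝ᵥ x)|MeasurableSpace.comap (fun x : Fin 2 → ℝ => ξv θ ⬝ᵥ x) (borel ℝ)]) x| ≤ ε * _root_.enorm (wv θ) := hx
        _ = ε * r := by rw [henw]
    rw [integral_const, probReal_univ, one_smul] at hle
    exact hle
  have key : ∀ a b : ℝ, ‖(∫ x, F b x ∂ν) - ∫ x, F a x ∂ν‖ ≤ 2 * π * (ε * r) * ‖b - a‖ := by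
    intro a b
    exact Convex.norm_image_sub_le_of_norm_hasDerivWithin_le
      (f' := fun θ => ∫ x, F' θ x ∂ν)
      (fun θ _ => (hGderiv θ).hasDerivWithinAt)
      (fun θ _ => hDbound θ) convex_univ (Set.mem_univ a) (Set.mem_univ b)
  have polar : ∀ η : Fin 2 → ℝ, _root_.enorm η = r → ∃ θ ∈ Set.Ioc (-π) π, η = ξv θ := by
    intro η hη
    set c : ℂ := ⟨η 0, η 1⟩ with hc
    have habs : ‖c‖ = r := by
      rw [Complex.norm_def, Complex.normSq_mk]
      unfold _root_.enorm at hη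
      rw [show η ⬝ᵥ η = η 0 * η 0 + η 1 * η 1 by simp [dotProduct, Fin.sum_univ_two]] at hη
      exact hη
    have hc0 : c ≠ 0 := by
      intro h; rw [h] at habs; simp at habs; exact hr.ne' habs.symm
    refine ⟨Complex.arg c, Complex.arg_mem_Ioc c, ?_⟩
    funext i
    fin_cases i
    · simp only [hξv, Matrix.cons_val_zero]
      rw [Complex.cos_arg hc0, habs]
      show η 0 = r * (η 0 / r)
      field_simp
    · simp only [hξv, Matrix.cons_val_one, Matrix.head_cons]
      rw [Complex.sin_arg, habs]
      show η 1 = r * (η 1 / r)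
      field_simp
  obtain ⟨θ₁, hθ₁, hξ₁⟩ := polar ξ hξn
  obtain ⟨θ₂, hθ₂, hξ₂⟩ := polar ξ' hξ'n
  have hper : ∀ θ : ℝ, ξv (θ - 2 * π) = ξv θ := by
    intro θ; funext i
    fin_cases i <;> simp [hξv, Real.cos_sub_two_pi, Real.sin_sub_two_pi]
  have hper' : ∀ θ : ℝ, ξv (θ + 2 * π) = ξv θ := by
    intro θ
    have h := hper (θ + 2 * π)
    simp only [add_sub_cancel_right] at h
    exact h.symm
  obtain ⟨θ₃, hθ₃eq, hθ₃close⟩ : ∃ θ₃, ξv θ₃ = ξv θ₂ ∧ |θ₃ - θ₁| ≤ π := by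
    rcases le_or_gt (θ₂ - θ₁) π with h | h
    · rcases le_or_gt (-π) (θ₂ - θ₁) with h' | h'
      · exact ⟨θ₂, rfl, abs_le.mpr ⟨by linarith, by linarith⟩⟩
      · exact ⟨θ₂ + 2 * π, hper' θ₂,
          abs_le.mpr ⟨by linarith [hθ₂.1, hθ₁.2], by linarith⟩⟩
    · exact ⟨θ₂ - 2 * π, hper θ₂,
        abs_le.mpr ⟨by linarith, by linarith [hθ₂.2, hθ₁.1]⟩⟩
  have hchar : ∀ θ : ℝ, charFun ν (ξv θ) = ∫ x, F θ x ∂ν := fun θ => rfl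
  rw [hξ₁, hξ₂, ← hθ₃eq]
  calc ‖charFun ν (ξv θ₃) - charFun ν (ξv θ₁)‖
      = ‖(∫ x, F θ₃ x ∂ν) - ∫ x, F θ₁ x ∂ν‖ := by
        rw [hchar, hchar]
    _ ≤ 2 * π * (ε * r) * ‖θ₃ - θ₁‖ := key θ₁ θ₃
    _ ≤ 2 * π * 4 * r * ε := by
        rw [Real.norm_eq_abs]
        have h4 : |θ₃ - θ₁| ≤ 4 := hθ₃close.trans Real.pi_le_four
        have hmm := mul_le_mul_of_nonneg_left h4
          (by positivity : (0:ℝ) ≤ 2 * π * (ε * r))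
        nlinarith [hmm]
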